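/- arXiv:2202.13057 — 2 statements merged into one kernel-verified Lean document; each statement's English description precedes it below -/
import Mathlib

section
/- Let Z be a real m×n matrix and let C be any n×n matrix with Z = ZC. Then the nuclear norm of C is at least the rank of Z, i.e. ‖C‖_* ≥ rank(Z). -/
open Matrix

/-- The nuclear norm of a real square matrix: the sum of its singular values,
i.e. the square roots of the eigenvalues of `Cᵀ C = Cᴴ C`. -/
noncomputable def nuclearNorm {n : ℕ} (C : Matrix (Fin n) (Fin n) ℝ) : ℝ :=
  ∑ i, Real.sqrt ((Matrix.isHermitian_conjTranspose_mul_self C).eigenvalues i)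

open scoped RealInnerProductSpace

/-- If `Z = Z C`, then the nuclear norm of `C` is at least `rank Z`. -/
theorem nuclearNorm_ge_rank_of_self_representation
    (m n : ℕ)
    (Z : Matrix (Fin m) (Fin n) ℝ) (C : Matrix (Fin n) (Fin n) ℝ)
    (h : Z = Z * C) :
    (Z.rank : ℝ) ≤ nuclearNorm C := by
  classical
  have hC : (Cᴴ * C).IsHermitian := Matrix.isHermitian_conjTranspose_mul_self C
  set u := hC.eigenvectorBasis with hu
  set e : (Fin n → ℝ) ≃ₗ[ℝ] EuclideanSpace ℝ (Fin n) := (WithLp.linearEquiv 2 ℝ (Fin n → ℝ)).symm with he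
  -- the row space of Z, as a submodule of Euclidean space
  set V : Submodule ℝ (EuclideanSpace ℝ (Fin n)) := (LinearMap.range (Matrix.mulVecLin Zᵀ)).map e.toLinearMap with hV
  have hVrank : Module.finrank ℝ V = Z.rank := by
    rw [hV, LinearEquiv.finrank_map_eq, ← Matrix.rank_transpose Z]
    rfl
  set r := Module.finrank ℝ V with hr
  set w := stdOrthonormalBasis ℝ V with hw
  -- the coerced basis vectors form an orthonormal family in E
  have hwo : Orthonormal ℝ (fun j : Fin r => ((w j : EuclideanSpace ℝ (Fin n)))) := by
    have h1 := w.orthonormal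
    rw [orthonormal_iff_ite] at h1 ⊢
    intro i j
    rw [← Submodule.coe_inner]
    exact h1 i j
  -- C acts as identity on row space
  have hfix : ∀ v ∈ V, Cᵀ *ᵥ (e.symm v) = e.symm v := by
    rintro v hv
    rw [hV, Submodule.mem_map] at hv
    obtain ⟨y, ⟨x, rfl⟩, rfl⟩ := hv
    simp only [LinearEquiv.coe_coe, LinearEquiv.symm_apply_apply, Matrix.mulVecLin_apply,
      Matrix.mulVec_mulVec, ← Matrix.transpose_mul, ← h]
  -- inner product as dot product
  have hinner : ∀ x y : EuclideanSpace ℝ (Fin n), ⟪x, y⟫ = (e.symm x) ⬝ᵥ (e.symm y) := by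
    intro x y
    simp [he, PiLp.inner_apply, dotProduct]
    exact Finset.sum_congr rfl fun _ _ => mul_comm _ _
  have hev_nonneg : ∀ i, 0 ≤ hC.eigenvalues i := by
    intro i
    exact (Matrix.posSemidef_conjTranspose_mul_self C).eigenvalues_nonneg i
  -- key per-index bound
  have key : ∀ i : Fin n,
      (∑ j : Fin r, ⟪((w j : EuclideanSpace ℝ (Fin n))), u i⟫ ^ 2) ≤ Real.sqrt (hC.eigenvalues i) := by
    intro i
    set a : Fin r → ℝ := fun j => ⟪((w j : EuclideanSpace ℝ (Fin n))), u i⟫ with ha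
    set p : EuclideanSpace ℝ (Fin n) := ∑ j, a j • ((w j : EuclideanSpace ℝ (Fin n))) with hp
    have hpV : p ∈ V := Submodule.sum_mem _ fun j _ => Submodule.smul_mem _ _ (w j).2
    have h1 : ⟪u i, p⟫ = ∑ j, a j ^ 2 := by
      rw [hp, inner_sum]
      refine Finset.sum_congr rfl fun j _ => ?_
      rw [real_inner_smul_right, real_inner_comm, sq]
    have hpp : ⟪p, p⟫ = ∑ j, a j ^ 2 := by
      rw [hp, sum_inner]
      refine Finset.sum_congr rfl fun j _ => ?_
      rw [real_inner_smul_left, ← hp, hwo.inner_right_fintype a j, sq]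
    have hbessel : ∑ j, a j ^ 2 ≤ 1 := by
      have hb := hwo.sum_inner_products_le (u i) (s := Finset.univ)
      have hn : ‖u i‖ = 1 := u.orthonormal.1 i
      rw [hn] at hb
      calc ∑ j, a j ^ 2 = ∑ j, ‖a j‖ ^ 2 := by
            refine Finset.sum_congr rfl fun j _ => ?_
            rw [Real.norm_eq_abs, sq_abs]
        _ ≤ 1 ^ 2 := hb
        _ = 1 := one_pow 2
    have hpnorm : ‖p‖ ≤ 1 := by
      have := real_inner_self_eq_norm_sq p
      nlinarith [norm_nonneg p, hpp, hbessel]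
    -- the image C *ᵥ u i, back in E
    set cu : EuclideanSpace ℝ (Fin n) := e (C *ᵥ (e.symm (u i))) with hcu
    have hcu_norm : ⟪cu, cu⟫ = hC.eigenvalues i := by
      rw [hinner, hcu, LinearEquiv.symm_apply_apply]
      rw [Matrix.dotProduct_mulVec, ← Matrix.mulVec_transpose, Matrix.mulVec_mulVec]
      have hev : (Cᵀ * C) *ᵥ (e.symm (u i)) = hC.eigenvalues i • (e.symm (u i)) := by
        have := hC.mulVec_eigenvectorBasis i
        exact this
      rw [hev, smul_dotProduct, smul_eq_mul]
      have : (e.symm (u i)) ⬝ᵥ (e.symm (u i)) = ⟪u i, u i⟫ := (hinner _ _).symm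
      rw [this, real_inner_self_eq_norm_sq, u.orthonormal.1 i]
      ring
    have hcu_norm' : ‖cu‖ = Real.sqrt (hC.eigenvalues i) := by
      rw [← hcu_norm, hinner, ← hinner, real_inner_self_eq_norm_sq,
        Real.sqrt_sq (norm_nonneg cu)]
    have hadj : ⟪u i, p⟫ = ⟪cu, p⟫ := by
      rw [hinner, hinner, hcu, LinearEquiv.symm_apply_apply]
      conv_lhs => rw [← hfix p hpV]
      rw [Matrix.dotProduct_mulVec, Matrix.vecMul_transpose]
    calc (∑ j : Fin r, a j ^ 2) = ⟪u i, p⟫ := h1.symm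
      _ = ⟪cu, p⟫ := hadj
      _ ≤ ‖cu‖ * ‖p‖ := real_inner_le_norm cu p
      _ ≤ Real.sqrt (hC.eigenvalues i) * 1 := by
          rw [hcu_norm']
          exact mul_le_mul_of_nonneg_left hpnorm (Real.sqrt_nonneg _)
      _ = Real.sqrt (hC.eigenvalues i) := mul_one _
  -- put everything together
  have hmain : (r : ℝ) ≤ ∑ i, Real.sqrt (hC.eigenvalues i) := by
    have hones : (r : ℝ) = ∑ j : Fin r, ⟪((w j : EuclideanSpace ℝ (Fin n))), ((w j : EuclideanSpace ℝ (Fin n)))⟫ := by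
      have : ∀ j : Fin r, ⟪((w j : EuclideanSpace ℝ (Fin n))), ((w j : EuclideanSpace ℝ (Fin n)))⟫ = (1 : ℝ) := by
        intro j
        rw [real_inner_self_eq_norm_sq, hwo.1 j, one_pow]
      simp [this, hwo.1]
    calc (r : ℝ) = ∑ j : Fin r, ⟪((w j : EuclideanSpace ℝ (Fin n))), ((w j : EuclideanSpace ℝ (Fin n)))⟫ := hones
      _ = ∑ j : Fin r, ∑ i : Fin n, ⟪((w j : EuclideanSpace ℝ (Fin n))), u i⟫ * ⟪u i, ((w j : EuclideanSpace ℝ (Fin n)))⟫ := by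
          refine Finset.sum_congr rfl fun j _ => ?_
          exact (u.sum_inner_mul_inner _ _).symm
      _ = ∑ i : Fin n, ∑ j : Fin r, ⟪((w j : EuclideanSpace ℝ (Fin n))), u i⟫ ^ 2 := by
          rw [Finset.sum_comm]
          refine Finset.sum_congr rfl fun i _ => Finset.sum_congr rfl fun j _ => ?_
          rw [sq, real_inner_comm (u i)]
      _ ≤ ∑ i : Fin n, Real.sqrt (hC.eigenvalues i) := Finset.sum_le_sum fun i _ => key i
  rw [← hVrank]
  exact hmain
end

section
/- Let V be an n×r real matrix with orthonormal columns (VᵀV = I_r), and suppose the index set {1,…,n} is partitioned into groups such that the row space of Z = UΛVᵀ decomposes as a direct sum of independent subspaces, one spanned by the columns of Z in each group. If columns α and β of Z belong to groups lying in different independent subspaces, then (VVᵀ)_{αβ} = 0. -/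
open Matrix

/-- Given disjoint submodules `A`, `B` of a vector space, there is a complement of `A`
containing `B`. -/
lemma exists_isCompl_ge {E : Type*} [AddCommGroup E] [Module ℝ E]
    (A B : Submodule ℝ E) (h : Disjoint A B) : ∃ C, B ≤ C ∧ IsCompl A C := by
  obtain ⟨C₀, hC₀⟩ := Submodule.exists_isCompl (A ⊔ B)
  refine ⟨B ⊔ C₀, le_sup_left, ?_, ?_⟩
  · rw [Submodule.disjoint_def]
    intro x hxA hxBC
    obtain ⟨b, hb, c, hc, rfl⟩ := Submodule.mem_sup.mp hxBC
    have hcmem : c ∈ (A ⊔ B) ⊓ C₀ := by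
      refine ⟨?_, hc⟩
      have hcc : c = (b + c) - b := by abel
      rw [hcc]
      exact Submodule.sub_mem _ (Submodule.mem_sup_left hxA) (Submodule.mem_sup_right hb)
    have hc0 : c = 0 := (Submodule.disjoint_def.mp hC₀.disjoint) c hcmem.1 hcmem.2
    subst hc0
    rw [add_zero] at hxA ⊢
    exact (Submodule.disjoint_def.mp h) b hxA hb
  · rw [codisjoint_iff, ← sup_assoc]
    exact codisjoint_iff.mp hC₀.codisjoint

/-- Subspace Separation Theorem: Suppose `Z = U Λ Vᵀ` is a skinny SVD and
the columns of `Z` are grouped by `g` so that the subspaces spanned by the columns of each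
group are independent (their sum is direct). If columns `α` and `β` belong to different
groups, then `(V Vᵀ)_{αβ} = 0`. -/
theorem subspace_separation
    (m n r K : ℕ)
    (Z : Matrix (Fin m) (Fin n) ℝ)
    (U : Matrix (Fin m) (Fin r) ℝ)
    (Λ : Matrix (Fin r) (Fin r) ℝ) (d : Fin r → ℝ)
    (V : Matrix (Fin n) (Fin r) ℝ)
    (hΛ : Λ = Matrix.diagonal d) (hd : ∀ i, d i ≠ 0)
    (hU : Uᵀ * U = 1) (hV : Vᵀ * V = 1)
    (hZ : Z = U * Λ * Vᵀ)
    (g : Fin n → Fin K)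
    (S : Fin K → Submodule ℝ (Fin m → ℝ))
    (hspan : ∀ k, S k = Submodule.span ℝ ((fun j => fun i => Z i j) '' {j | g j = k}))
    (hindep : iSupIndep S)
    (α β : Fin n) (hdiff : g α ≠ g β) :
    (V * Vᵀ) α β = 0 := by
  subst hΛ
  classical
  set k : Fin K := g β with hk
  -- the column space of V, as a submodule of ℝⁿ
  set R : Submodule ℝ (Fin n → ℝ) := LinearMap.range (Matrix.mulVecLin V) with hR
  -- the β-th column of Q = V Vᵀ
  set q : Fin n → ℝ := fun j => (V * Vᵀ) j β with hq
  have hqV : q = V.mulVec (fun i => V β i) := by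
    ext j
    simp [hq, Matrix.mul_apply, Matrix.mulVec, dotProduct, Matrix.transpose_apply]
  have hqR : q ∈ R := ⟨fun i => V β i, hqV.symm⟩
  -- ⟨V w, V c⟩ = ⟨w, c⟩
  have hVV : ∀ (w c : Fin r → ℝ), V.mulVec w ⬝ᵥ V.mulVec c = w ⬝ᵥ c := by
    intro w c
    rw [Matrix.dotProduct_mulVec, ← Matrix.vecMul_transpose, Matrix.vecMul_vecMul, hV,
      Matrix.vecMul_one]
  -- e_β - q is orthogonal to R
  have hperp : ∀ x ∈ R, (Pi.single β 1 - q) ⬝ᵥ x = 0 := by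
    rintro x ⟨c, rfl⟩
    rw [Matrix.mulVecLin_apply, sub_dotProduct, hqV, hVV]
    simp [dotProduct, Matrix.mulVec, Pi.single_apply, mul_comm]
  -- columns of Z lie in the corresponding subspaces
  have hcol : ∀ j, (fun i => Z i j) ∈ S (g j) := by
    intro j
    rw [hspan]
    exact Submodule.subset_span ⟨j, rfl, rfl⟩
  -- R is invariant under zeroing out coordinates outside group k
  have hinv : ∀ x ∈ R, (fun j => if g j = k then x j else 0) ∈ R := by
    rintro x ⟨c, rfl⟩
    rw [Matrix.mulVecLin_apply]
    -- express V *ᵥ c as Zᵀ *ᵥ y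
    set D : Matrix (Fin r) (Fin r) ℝ := Matrix.diagonal d with hD
    set D' : Matrix (Fin r) (Fin r) ℝ := Matrix.diagonal (fun i => (d i)⁻¹) with hD'
    set y : Fin m → ℝ := U.mulVec (D'.mulVec c) with hy
    have hZt : Zᵀ = V * D * Uᵀ := by
      rw [hZ, Matrix.transpose_mul, Matrix.transpose_mul, Matrix.transpose_transpose,
        Matrix.diagonal_transpose, Matrix.mul_assoc]
    have hmat : V * D * Uᵀ * (U * D') = V := by
      rw [Matrix.mul_assoc (V * D) Uᵀ (U * D'), ← Matrix.mul_assoc Uᵀ U D', hU, one_mul,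
        Matrix.mul_assoc V D D', hD, hD', Matrix.diagonal_mul_diagonal]
      have : (fun i => d i * (d i)⁻¹) = fun _ : Fin r => (1 : ℝ) := by
        funext i; exact mul_inv_cancel₀ (hd i)
      rw [this, Matrix.diagonal_one, Matrix.mul_one]
    have hrep : V.mulVec c = Zᵀ.mulVec y := by
      rw [hZt, hy, Matrix.mulVec_mulVec, Matrix.mulVec_mulVec,
        Matrix.mul_assoc (V * D * Uᵀ) U D', hmat]
    -- build the projection onto S k killing the other subspaces
    set B : Submodule ℝ (Fin m → ℝ) := ⨆ (l) (_ : l ≠ k), S l with hB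
    obtain ⟨C, hBC, hcompl⟩ := exists_isCompl_ge (S k) B (hindep k)
    set p : (Fin m → ℝ) →ₗ[ℝ] (Fin m → ℝ) :=
      (S k).subtype ∘ₗ (S k).projectionOnto C hcompl with hp
    have hpk : ∀ z ∈ S k, p z = z := by
      intro z hz
      simp [hp, Submodule.projectionOnto_apply_left hcompl ⟨z, hz⟩]
    have hpl : ∀ z ∈ C, p z = 0 := by
      intro z hz
      simp [hp, Submodule.projectionOnto_apply_right hcompl ⟨z, hz⟩]
    set y' : Fin m → ℝ := fun i => p (Pi.single i 1) ⬝ᵥ y with hy'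
    have hdualp : ∀ z : Fin m → ℝ, z ⬝ᵥ y' = p z ⬝ᵥ y := by
      intro z
      have hzz : z = ∑ i, z i • (Pi.single i 1 : Fin m → ℝ) := by
        funext j
        simp [Pi.single_apply, Finset.sum_apply]
      have hpz : p z = ∑ i, z i • p (Pi.single i 1 : Fin m → ℝ) := by
        conv_lhs => rw [hzz]
        rw [map_sum]
        simp only [_root_.map_smul]
      rw [hpz]
      simp only [dotProduct, Finset.sum_apply, Pi.smul_apply, smul_eq_mul,
        Finset.sum_mul, Finset.mul_sum, hy']
      rw [Finset.sum_comm]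
      simp only [mul_assoc]
    have hcolval : ∀ j, (fun i => Z i j) ⬝ᵥ y' = if g j = k then (V.mulVec c) j else 0 := by
      intro j
      rw [hdualp]
      by_cases hjk : g j = k
      · rw [if_pos hjk, hpk _ (hjk ▸ hcol j), hrep]
        simp [Matrix.mulVec, dotProduct, Matrix.transpose_apply]
      · rw [if_neg hjk]
        have hzB : (fun i => Z i j) ∈ B :=
          (le_iSup₂ (f := fun l (_ : l ≠ k) => S l) (g j) hjk) (hcol j)
        rw [hpl _ (hBC hzB), zero_dotProduct]
    refine ⟨(D * Uᵀ).mulVec y', ?_⟩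
    rw [Matrix.mulVecLin_apply, Matrix.mulVec_mulVec, ← Matrix.mul_assoc, ← hZt]
    funext j
    rw [← hcolval j]
    simp [Matrix.mulVec, dotProduct, Matrix.transpose_apply]
  -- the truncated column q'
  set q' : Fin n → ℝ := fun j => if g j = k then q j else 0 with hq'
  have hq'R : q' ∈ R := hinv q hqR
  -- e_β - q' is also orthogonal to R
  have hperp' : ∀ x ∈ R, (Pi.single β 1 - q') ⬝ᵥ x = 0 := by
    intro x hx
    set x' : Fin n → ℝ := fun j => if g j = k then x j else 0 with hx'
    have hx'R : x' ∈ R := hinv x hx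
    have h1 : q' ⬝ᵥ x = q ⬝ᵥ x' := by
      apply Finset.sum_congr rfl
      intro j _
      by_cases hjk : g j = k <;> simp [hq', hx', hjk]
    have h2 : q ⬝ᵥ x' = Pi.single β 1 ⬝ᵥ x' := by
      have := hperp x' hx'R
      rw [sub_dotProduct, sub_eq_zero] at this
      exact this.symm
    have h3 : Pi.single β 1 ⬝ᵥ x' = x β := by
      simp only [dotProduct, Pi.single_apply, hx']
      rw [Finset.sum_eq_single_of_mem β (Finset.mem_univ β)]
      · simp [hk]
      · intro b _ hb
        simp [hb]
    have h4 : Pi.single β 1 ⬝ᵥ x = x β := by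
      simp [dotProduct, Pi.single_apply]
    rw [sub_dotProduct, h1, h2, h3, h4, sub_self]
  -- hence q = q'
  have hdiffR : q - q' ∈ R := Submodule.sub_mem R hqR hq'R
  have hcalc : (Pi.single β 1 - q') - (Pi.single β 1 - q) = q - q' := by abel
  have hdiffR2 : (Pi.single β 1 - q') - (Pi.single β 1 - q) ∈ R := by rw [hcalc]; exact hdiffR
  have hdd : (q - q') ⬝ᵥ (q - q') = 0 := by
    rw [← hcalc, sub_dotProduct, hperp' _ hdiffR2, hperp _ hdiffR2, sub_self]
  have hqq' : q = q' := sub_eq_zero.mp (dotProduct_self_eq_zero.mp hdd)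
  have hfin : q α = 0 := by
    rw [hqq', hq']
    simp [if_neg hdiff]
  exact hfin
end
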